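/- Let ρ be a density matrix on ℂ^d⊗ℂ^d with Schmidt number s(ρ) ≤ r. Then there exist finitely many probabilities p_k (p_k ≥ 0, Σ_k p_k = 1) and pure states |ψ_k⟩ ∈ ℂ^d⊗ℂ^d of Schmidt rank ≤ r such that the matrix Γ_ρ − Σ_k p_k Γ_{ψ_k} is positive semidefinite, where Γ_{ψ_k} is the covariance matrix of the state |ψ_k⟩⟨ψ_k| for the same canonical observable bases. -/

import Mathlib

open Matrix Kronecker BigOperators Finset
open scoped ComplexOrder

/-- Expectation value ⟨A⟩_ρ = Re tr(ρ A). -/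
noncomputable def expval {n : Type*} [Fintype n] (ρ A : Matrix n n ℂ) : ℝ :=
  ((ρ * A).trace).re

/-- A density matrix: positive semidefinite with unit trace. -/
def IsDensityMatrix {n : Type*} [Fintype n] (ρ : Matrix n n ℂ) : Prop :=
  ρ.PosSemidef ∧ ρ.trace = 1

/-- The projector |v⟩⟨v| associated to a vector. -/
noncomputable def pureState {n : Type*} (v : n → ℂ) : Matrix n n ℂ :=
  Matrix.vecMulVec v (star v)

/-- A normalized vector. -/
def IsUnitVec {n : Type*} [Fintype n] (v : n → ℂ) : Prop :=
  ∑ i, Complex.normSq (v i) = 1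

/-- The canonical Hermitian operator basis of ℂ^d, indexed by pairs (j,k):
diagonal operators for j = k, real operators for j < k, imaginary operators for j > k. -/
noncomputable def canonG (d : ℕ) : Fin d × Fin d → Matrix (Fin d) (Fin d) ℂ := fun μ =>
  if μ.1 = μ.2 then Matrix.single μ.1 μ.1 1
  else if μ.1 < μ.2 then
    ((Real.sqrt 2 : ℂ))⁻¹ • (Matrix.single μ.1 μ.2 1 + Matrix.single μ.2 μ.1 1)
  else
    (Complex.I * ((Real.sqrt 2 : ℂ))⁻¹) •
      (Matrix.single μ.2 μ.1 1 - Matrix.single μ.1 μ.2 1)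

/-- Covariance matrix of a family of observables w.r.t. a state ρ. -/
noncomputable def covMat {n K : Type*} [Fintype n] (ρ : Matrix n n ℂ)
    (M : K → Matrix n n ℂ) : Matrix K K ℝ :=
  Matrix.of fun j k =>
    (1/2 : ℝ) * expval ρ (M j * M k + M k * M j) - expval ρ (M j) * expval ρ (M k)

/-- The local observables (g_μ ⊗ 1, 1 ⊗ g_ν) on the bipartite space. -/
noncomputable def bipObs (d : ℕ) :
    (Fin d × Fin d) ⊕ (Fin d × Fin d) → Matrix (Fin d × Fin d) (Fin d × Fin d) ℂ :=
  Sum.elim (fun μ => canonG d μ ⊗ₖ (1 : Matrix (Fin d) (Fin d) ℂ))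
           (fun ν => (1 : Matrix (Fin d) (Fin d) ℂ) ⊗ₖ canonG d ν)

/-- The full covariance matrix Γ_ρ of the canonical bipartite observables. -/
noncomputable def GammaCM (d : ℕ) (ρ : Matrix (Fin d × Fin d) (Fin d × Fin d) ℂ) :
    Matrix ((Fin d × Fin d) ⊕ (Fin d × Fin d)) ((Fin d × Fin d) ⊕ (Fin d × Fin d)) ℝ :=
  covMat ρ (bipObs d)

/-- The cross-covariance block X_ρ. -/
noncomputable def crossCov (d : ℕ) (ρ : Matrix (Fin d × Fin d) (Fin d × Fin d) ℂ) :
    Matrix (Fin d × Fin d) (Fin d × Fin d) ℝ :=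
  Matrix.of fun μ ν =>
    expval ρ (canonG d μ ⊗ₖ canonG d ν)
      - expval ρ (canonG d μ ⊗ₖ 1) * expval ρ ((1 : Matrix (Fin d) (Fin d) ℂ) ⊗ₖ canonG d ν)

/-- Reduced state on the first subsystem. -/
noncomputable def redA (d : ℕ) (ρ : Matrix (Fin d × Fin d) (Fin d × Fin d) ℂ) :
    Matrix (Fin d) (Fin d) ℂ :=
  Matrix.of fun i j => ∑ k, ρ (i, k) (j, k)

/-- Reduced state on the second subsystem. -/
noncomputable def redB (d : ℕ) (ρ : Matrix (Fin d × Fin d) (Fin d × Fin d) ℂ) :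
    Matrix (Fin d) (Fin d) ℂ :=
  Matrix.of fun i j => ∑ k, ρ (k, i) (k, j)

/-- Purity tr(σ²) (real part). -/
noncomputable def purity {n : Type*} [Fintype n] (σ : Matrix n n ℂ) : ℝ :=
  ((σ * σ).trace).re

/-- Trace norm of a real matrix: sum of its singular values, i.e. tr √(XᵀX). -/
noncomputable def traceNorm {n : Type*} [Fintype n] [DecidableEq n] (X : Matrix n n ℝ) : ℝ :=
  ((Matrix.posSemidef_conjTranspose_mul_self X).1.eigenvectorUnitary.1 *
    Matrix.diagonal ((RCLike.ofReal : ℝ → ℝ) ∘ (Real.sqrt ·) ∘ (Matrix.posSemidef_conjTranspose_mul_self X).1.eigenvalues) *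
    (star (Matrix.posSemidef_conjTranspose_mul_self X).1.eigenvectorUnitary : Matrix n n ℝ)).trace

/-- Schmidt rank of a pure state vector is the rank of its coefficient matrix. -/
def SchmidtRankLE (d r : ℕ) (v : Fin d × Fin d → ℂ) : Prop :=
  (Matrix.of fun j k : Fin d => v (j, k)).rank ≤ r

/-- Schmidt number at most r. -/
def SchmidtNumberLE (d r : ℕ) (ρ : Matrix (Fin d × Fin d) (Fin d × Fin d) ℂ) : Prop :=
  ∃ (n : ℕ) (p : Fin n → ℝ) (ψ : Fin n → (Fin d × Fin d → ℂ)),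
    (∀ k, 0 ≤ p k) ∧ (∑ k, p k = 1) ∧ (∀ k, IsUnitVec (ψ k)) ∧
    (∀ k, SchmidtRankLE d r (ψ k)) ∧
    ρ = ∑ k, (p k : ℂ) • pureState (ψ k)


private lemma expval_sum_smul {n : Type*} [Fintype n] {m : ℕ} (p : Fin m → ℝ)
    (σ : Fin m → Matrix n n ℂ) (A : Matrix n n ℂ) :
    expval (∑ k, (p k : ℂ) • σ k) A = ∑ k, p k * expval (σ k) A := by
  unfold expval
  rw [Finset.sum_mul, Matrix.trace_sum, Complex.re_sum]
  refine Finset.sum_congr rfl fun k _ => ?_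
  rw [Matrix.smul_mul, Matrix.trace_smul, smul_eq_mul, Complex.mul_re]
  simp

private lemma jensen_entry {m : ℕ} (p : Fin m → ℝ) (hps : ∑ k, p k = 1)
    (a b : Fin m → ℝ) :
    ∑ k, p k * ((a k - ∑ l, p l * a l) * (b k - ∑ l, p l * b l))
      = (∑ k, p k * (a k * b k)) - (∑ k, p k * a k) * (∑ k, p k * b k) := by
  set A := ∑ l, p l * a l with hA
  set B := ∑ l, p l * b l with hB
  have h : ∀ k, p k * ((a k - A) * (b k - B))
      = p k * (a k * b k) - (p k * a k) * B - A * (p k * b k) + p k * (A * B) :=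
    fun k => by ring
  simp_rw [h]
  rw [Finset.sum_add_distrib, Finset.sum_sub_distrib, Finset.sum_sub_distrib,
    ← Finset.sum_mul, ← Finset.mul_sum, ← Finset.sum_mul, hps]
  ring

private lemma quad_sum {ι : Type*} [Fintype ι] {m : ℕ} (p : Fin m → ℝ)
    (w : Fin m → ι → ℝ) (x : ι → ℝ) :
    ∑ j, x j * (∑ j', (∑ k, p k * (w k j * w k j')) * x j')
      = ∑ k, p k * (∑ j, w k j * x j) ^ 2 := by
  have h1 : ∀ j, ∑ j', (∑ k, p k * (w k j * w k j')) * x j'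
      = ∑ k, p k * w k j * (∑ j', w k j' * x j') := by
    intro j
    simp_rw [Finset.sum_mul]
    rw [Finset.sum_comm]
    refine Finset.sum_congr rfl fun k _ => ?_
    rw [Finset.mul_sum]
    exact Finset.sum_congr rfl fun j' _ => by ring
  simp_rw [h1]
  have h2 : ∀ j, x j * (∑ k, p k * w k j * (∑ j', w k j' * x j'))
      = ∑ k, (w k j * x j) * (p k * (∑ j', w k j' * x j')) := by
    intro j
    rw [Finset.mul_sum]
    exact Finset.sum_congr rfl fun k _ => by ring
  simp_rw [h2]
  rw [Finset.sum_comm]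
  refine Finset.sum_congr rfl fun k _ => ?_
  rw [← Finset.sum_mul]
  ring

private lemma half_collect {m : ℕ} (p E a b : Fin m → ℝ) :
    (1/2 : ℝ) * (∑ k, p k * E k) - (∑ k, p k * a k) * (∑ k, p k * b k)
      - ∑ k, p k * ((1/2 : ℝ) * E k - a k * b k)
    = (∑ k, p k * (a k * b k)) - (∑ k, p k * a k) * (∑ k, p k * b k) := by
  have h1 : ∑ k, p k * ((1/2 : ℝ) * E k - a k * b k)
      = ∑ k, ((1/2 : ℝ) * (p k * E k) - p k * (a k * b k)) :=
    Finset.sum_congr rfl fun k _ => by ring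
  rw [h1, Finset.sum_sub_distrib, ← Finset.mul_sum]
  ring

/-- For a density matrix ρ on ℂ^d ⊗ ℂ^d with Schmidt number ≤ r, there exist
probabilities p_k and pure states ψ_k of Schmidt rank ≤ r such that
Γ_ρ - Σ_k p_k Γ_{ψ_k} is positive semidefinite. -/
theorem schmidt_number_covariance_matrix_criterion
    (d r : ℕ) (ρ : Matrix (Fin d × Fin d) (Fin d × Fin d) ℂ)
    (hρ : IsDensityMatrix ρ) (hs : SchmidtNumberLE d r ρ) :
    ∃ (n : ℕ) (p : Fin n → ℝ) (ψ : Fin n → (Fin d × Fin d → ℂ)),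
      (∀ k, 0 ≤ p k) ∧ (∑ k, p k = 1) ∧ (∀ k, IsUnitVec (ψ k)) ∧
      (∀ k, SchmidtRankLE d r (ψ k)) ∧
      (GammaCM d ρ - ∑ k, p k • GammaCM d (pureState (ψ k))).PosSemidef := by

  obtain ⟨n, p, ψ, hp, hps, hu, hr, hρeq⟩ := hs
  refine ⟨n, p, ψ, hp, hps, hu, hr, ?_⟩
  set m : Fin n → ((Fin d × Fin d) ⊕ (Fin d × Fin d)) → ℝ :=
    fun k j => expval (pureState (ψ k)) (bipObs d j) with hm
  have hE : ∀ A, expval ρ A = ∑ k, p k * expval (pureState (ψ k)) A := fun A => by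
    rw [hρeq, expval_sum_smul]
  have hentry : ∀ j j',
      (GammaCM d ρ - ∑ k, p k • GammaCM d (pureState (ψ k))) j j'
        = ∑ k, p k * ((m k j - ∑ l, p l * m l j) * (m k j' - ∑ l, p l * m l j')) := by
    intro j j'
    rw [jensen_entry p hps]
    simp only [Matrix.sub_apply, Matrix.sum_apply, Matrix.smul_apply, Pi.smul_apply,
      GammaCM, covMat, Matrix.of_apply, smul_eq_mul, hE, hm]
    have := half_collect p
      (fun k => expval (pureState (ψ k)) (bipObs d j * bipObs d j' + bipObs d j' * bipObs d j))
      (fun k => expval (pureState (ψ k)) (bipObs d j))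
      (fun k => expval (pureState (ψ k)) (bipObs d j'))
    simpa using this
  refine Matrix.posSemidef_iff_dotProduct_mulVec.mpr ⟨?_, ?_⟩
  · refine Matrix.ext fun i j => ?_
    rw [Matrix.conjTranspose_apply, star_trivial, hentry, hentry]
    exact Finset.sum_congr rfl fun k _ => by ring
  · intro x
    have hq : star x ⬝ᵥ (GammaCM d ρ - ∑ k, p k • GammaCM d (pureState (ψ k))) *ᵥ x
        = ∑ k, p k * (∑ j, (m k j - ∑ l, p l * m l j) * x j) ^ 2 := by
      rw [← quad_sum p (fun k j => m k j - ∑ l, p l * m l j) x]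
      simp only [dotProduct, Matrix.mulVec, Pi.star_apply, star_trivial, hentry]
    rw [hq]
    exact Finset.sum_nonneg fun k _ => mul_nonneg (hp k) (sq_nonneg _)
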